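/- arXiv:1308.6270 — 5 statements merged into one kernel-verified Lean document; each statement's English description precedes it below -/
import Mathlib

section
/- For any finite set Ω, any subset F ⊆ Ω, any two probability distributions π_j, π_{j+1} on Ω that are strictly positive on F with π_j(F) > 0 and π_{j+1}(F) > 0, any constant C > 0, and any function g : ℝ → ℝ satisfying g(x) = x⁻¹ · g(x⁻¹) for all x > 0 and with the denominator below nonzero, the ratio π_{j+1}(F)/π_j(F) equals C · ⟨g(C·π_j/π_{j+1})⟩_j / ⟨g(C⁻¹·π_{j+1}/π_j)⟩_{j+1}, where ⟨f⟩_j denotes the expectation of f under the conditional distribution π_j(·|F) = π_j(·)/π_j(F) on F. -/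
open Finset

/-- Bennett's acceptance ratio identity (Eq. (SM3)):
`π_{j+1}(F)/π_j(F) = C ⟨g(C π_j/π_{j+1})⟩_j / ⟨g(C⁻¹ π_{j+1}/π_j)⟩_{j+1}`,
where `⟨f⟩_j = (1/π_j(F)) ∑_{E ∈ F} π_j(E) f(E)`. -/
theorem bennett_acceptance_ratio
    {Ω : Type*} [Fintype Ω] (F : Finset Ω)
    (πj πj1 : Ω → ℝ)
    (hπj_nonneg : ∀ E, 0 ≤ πj E) (hπj_sum : ∑ E, πj E = 1)
    (hπj1_nonneg : ∀ E, 0 ≤ πj1 E) (hπj1_sum : ∑ E, πj1 E = 1)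
    (hπj_pos : ∀ E ∈ F, 0 < πj E) (hπj1_pos : ∀ E ∈ F, 0 < πj1 E)
    (hFj : 0 < ∑ E ∈ F, πj E) (hFj1 : 0 < ∑ E ∈ F, πj1 E)
    (C : ℝ) (hC : 0 < C)
    (g : ℝ → ℝ) (hg : ∀ x : ℝ, 0 < x → g x = x⁻¹ * g x⁻¹)
    (hden : ((∑ E ∈ F, πj1 E * g (C⁻¹ * πj1 E / πj E)) / ∑ E ∈ F, πj1 E) ≠ 0) :
    (∑ E ∈ F, πj1 E) / (∑ E ∈ F, πj E) =
      C * (((∑ E ∈ F, πj E * g (C * πj E / πj1 E)) / ∑ E ∈ F, πj E) /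
           ((∑ E ∈ F, πj1 E * g (C⁻¹ * πj1 E / πj E)) / ∑ E ∈ F, πj1 E)) := by
  have key : (∑ E ∈ F, πj E * g (C * πj E / πj1 E)) =
      C⁻¹ * ∑ E ∈ F, πj1 E * g (C⁻¹ * πj1 E / πj E) := by
    rw [Finset.mul_sum]
    apply Finset.sum_congr rfl
    intro E hE
    have hj := hπj_pos E hE
    have hj1 := hπj1_pos E hE
    have hx : 0 < C * πj E / πj1 E := by positivity
    have hinv : (C * πj E / πj1 E)⁻¹ = C⁻¹ * πj1 E / πj E := by
      field_simp
    rw [hg _ hx, hinv]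
    field_simp
  have hS1 : (∑ E ∈ F, πj1 E * g (C⁻¹ * πj1 E / πj E)) ≠ 0 := by
    intro h
    exact hden (by rw [h]; simp)
  rw [key]
  generalize (∑ E ∈ F, πj1 E * g (C⁻¹ * πj1 E / πj E)) = S1 at hS1 ⊢
  field_simp
end

section
/- Let p and q be probability distributions on a finite set F. Then (∑_{E ∈ F} 2·p(E)·q(E)/(p(E)+q(E)))⁻¹ − 1 ≤ (1 − ‖p − q‖₁)⁻¹, where ‖p − q‖₁ = (1/2)∑_E |p(E) − q(E)| is the total variation distance, assuming ‖p−q‖₁ < 1 and all sums are well-defined (interpreting 2pq/(p+q) as 0 when p(E)=q(E)=0). -/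
open Finset

/-- The harmonic-mean sum bound behind Eq. (SM9): for probability distributions
`p, q` on a finite set with total variation distance `‖p−q‖₁ < 1`,
`(∑ 2 p q/(p+q))⁻¹ − 1 ≤ (1 − ‖p−q‖₁)⁻¹`. -/
theorem bennett_variance_bound
    {F : Type*} [Fintype F] (p q : F → ℝ)
    (hp_nonneg : ∀ E, 0 ≤ p E) (hq_nonneg : ∀ E, 0 ≤ q E)
    (hp_sum : ∑ E, p E = 1) (hq_sum : ∑ E, q E = 1)
    (htv : (1 / 2) * ∑ E, |p E - q E| < 1) :
    (∑ E, 2 * p E * q E / (p E + q E))⁻¹ - 1 ≤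
      (1 - (1 / 2) * ∑ E, |p E - q E|)⁻¹ := by
  set T : ℝ := (1 / 2) * ∑ E, |p E - q E| with hT
  have hmin : ∑ E, min (p E) (q E) = 1 - T := by
    have : ∀ E, min (p E) (q E) = (p E + q E - |p E - q E|) / 2 := by
      intro E
      rcases le_total (p E) (q E) with h | h
      · rw [min_eq_left h, abs_of_nonpos (by linarith)]; ring
      · rw [min_eq_right h, abs_of_nonneg (by linarith)]; ring
    simp_rw [this]
    rw [← Finset.sum_div, Finset.sum_sub_distrib, Finset.sum_add_distrib,
      hp_sum, hq_sum, hT]; ring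
  have hle : ∀ E, min (p E) (q E) ≤ 2 * p E * q E / (p E + q E) := by
    intro E
    rcases eq_or_lt_of_le (add_nonneg (hp_nonneg E) (hq_nonneg E)) with h | h
    · have hp0 : p E = 0 := by nlinarith [hp_nonneg E, hq_nonneg E]
      have hq0 : q E = 0 := by nlinarith [hp_nonneg E, hq_nonneg E]
      simp [hp0, hq0]
    · rw [le_div_iff₀ h]
      rcases le_total (p E) (q E) with hpq | hpq
      · rw [min_eq_left hpq]; nlinarith [hp_nonneg E, hq_nonneg E]
      · rw [min_eq_right hpq]; nlinarith [hp_nonneg E, hq_nonneg E]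
  have hS : 1 - T ≤ ∑ E, 2 * p E * q E / (p E + q E) := by
    rw [← hmin]; exact Finset.sum_le_sum fun E _ => hle E
  have hTpos : 0 < 1 - T := by linarith
  have hSpos : 0 < ∑ E, 2 * p E * q E / (p E + q E) := lt_of_lt_of_le hTpos hS
  have := inv_anti₀ hTpos hS
  have h1 : 0 ≤ (1 : ℝ) := zero_le_one
  linarith
end

section
/- Let G = (V, E) be a finite graph with nonnegative edge weights φ, let S ⊆ V, and let R be a minimum-weight edge set with ∂R = S. If e = (u,v) ∈ R and S' = S Δ {u,v}, then R \ {e} is a minimum-weight edge set with boundary S'. -/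
open Finset

/-- Degree (with multiplicity, loops counted twice) of a vertex `v` in the edge set `R`. -/
def edgeDeg {V E : Type*} [DecidableEq V] (ends : E → V × V) (R : Finset E) (v : V) : ℕ :=
  ∑ e ∈ R, ((if (ends e).1 = v then 1 else 0) + (if (ends e).2 = v then 1 else 0))

/-- The boundary `∂R`: the set of vertices incident to an odd number of edges of `R`. -/
def bdry {V E : Type*} [Fintype V] [DecidableEq V] (ends : E → V × V) (R : Finset E) :
    Finset V :=
  Finset.univ.filter fun v => Odd (edgeDeg ends R v)

lemma bdry_erase {V E : Type*} [Fintype V] [DecidableEq V] [DecidableEq E]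
    (ends : E → V × V) (R : Finset E) (e : E) (he : e ∈ R) :
    bdry ends (R.erase e) =
      symmDiff (bdry ends R) (symmDiff {(ends e).1} {(ends e).2}) := by
  ext w
  simp only [bdry, mem_filter, mem_univ, true_and, Finset.mem_symmDiff, Finset.mem_singleton]
  have hsum : edgeDeg ends R w =
      ((if (ends e).1 = w then 1 else 0) + (if (ends e).2 = w then 1 else 0)) +
        edgeDeg ends (R.erase e) w := (Finset.add_sum_erase R _ he).symm
  by_cases h1 : (ends e).1 = w <;> by_cases h2 : (ends e).2 = w <;>
    simp [hsum, h1, h2, eq_comm (a := w), Nat.odd_iff, Nat.add_mod] <;> omega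

lemma bdry_insert {V E : Type*} [Fintype V] [DecidableEq V] [DecidableEq E]
    (ends : E → V × V) (R : Finset E) (e : E) (he : e ∉ R) :
    bdry ends (insert e R) =
      symmDiff (bdry ends R) (symmDiff {(ends e).1} {(ends e).2}) := by
  have h := bdry_erase ends (insert e R) e (mem_insert_self e R)
  rw [Finset.erase_insert he] at h
  rw [h, symmDiff_assoc, symmDiff_self, symmDiff_bot]

/-- Proposition inside the proof of Lemma 3: if `R` is a minimum-weight chain with
`∂R = S` and `e = (u,v) ∈ R`, then `R \ {e}` is a minimum-weight chain with boundary
`S' = S Δ {u,v}` (written as `S Δ ({u} Δ {v})`). -/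
theorem erase_min_weight_chain
    {V E : Type*} [Fintype V] [DecidableEq V] [DecidableEq E]
    (ends : E → V × V) (φ : E → ℝ) (hφ : ∀ e, 0 ≤ φ e)
    (S : Finset V) (R : Finset E)
    (hR : bdry ends R = S)
    (hmin : ∀ R' : Finset E, bdry ends R' = S → ∑ f ∈ R, φ f ≤ ∑ f ∈ R', φ f)
    (e : E) (he : e ∈ R) (u v : V) (hends : ends e = (u, v))
    (S' : Finset V) (hS' : S' = symmDiff S (symmDiff {u} {v})) :
    bdry ends (R.erase e) = S' ∧
      ∀ R' : Finset E, bdry ends R' = S' → ∑ f ∈ R.erase e, φ f ≤ ∑ f ∈ R', φ f := by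
  have hbd : bdry ends (R.erase e) = S' := by
    rw [bdry_erase ends R e he, hR, hends, hS']
  refine ⟨hbd, fun R' hR' => ?_⟩
  have hRsum : ∑ f ∈ R.erase e, φ f = ∑ f ∈ R, φ f - φ e := by
    have := Finset.add_sum_erase R φ he
    linarith
  by_cases heR' : e ∈ R'
  · have hb : bdry ends (R'.erase e) = S := by
      rw [bdry_erase ends R' e heR', hR', hS', hends, symmDiff_assoc, symmDiff_self,
        symmDiff_bot]
    have h1 := hmin _ hb
    have h2 : ∑ f ∈ R'.erase e, φ f = ∑ f ∈ R', φ f - φ e := by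
      have := Finset.add_sum_erase R' φ heR'
      linarith
    have := hφ e
    linarith
  · have hb : bdry ends (insert e R') = S := by
      rw [bdry_insert ends R' e heR', hR', hS', hends, symmDiff_assoc, symmDiff_self,
        symmDiff_bot]
    have h1 := hmin _ hb
    have h2 : ∑ f ∈ insert e R', φ f = φ e + ∑ f ∈ R', φ f :=
      Finset.sum_insert heR'
    linarith
end

section
/- Let G = (V, E) be a finite graph, Γ ⊆ E a cut of G associated to a partition V = V₀ ⊔ V₁, and T ⊆ V with T ∩ V₀ = ∅. Then all edge sets E' ⊆ E satisfying (∂E') \ T = S have the same parity of |E' ∩ Γ|, namely the parity of |S ∩ V₀|. -/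
open Finset

/-- Lemma 2, Case 1: if `Γ` is the cut of a partition `V = V₀ ⊔ V₁` and `T ∩ V₀ = ∅`,
then every edge set `E'` with `(∂E') \ T = S` has parity of `|E' ∩ Γ|` equal to the
parity of `|S ∩ V₀|`. -/
theorem cut_parity_syndrome
    {V E : Type*} [Fintype V] [DecidableEq V] [DecidableEq E]
    (ends : E → V × V) (V₀ V₁ : Finset V)
    (hcover : ∀ v, v ∈ V₀ ∨ v ∈ V₁) (hdisj : ∀ v, ¬(v ∈ V₀ ∧ v ∈ V₁))
    (Γ : Finset E)
    (hΓ : ∀ e, e ∈ Γ ↔ ((ends e).1 ∈ V₀ ↔ (ends e).2 ∉ V₀))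
    (T : Finset V) (hT : T ∩ V₀ = ∅)
    (S : Finset V) (E' : Finset E) (hE' : (bdry ends E') \ T = S) :
    (E' ∩ Γ).card % 2 = (S ∩ V₀).card % 2 := by
  have key1 : (∑ v ∈ V₀, (edgeDeg ends E' v : ZMod 2)) = ((E' ∩ Γ).card : ZMod 2) := by
    have : (∑ v ∈ V₀, (edgeDeg ends E' v : ZMod 2))
        = ∑ e ∈ E', ∑ v ∈ V₀, ((if (ends e).1 = v then (1 : ZMod 2) else 0)
            + (if (ends e).2 = v then 1 else 0)) := by
      rw [Finset.sum_comm]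
      refine Finset.sum_congr rfl fun v _ => ?_
      simp [edgeDeg, apply_ite (Nat.cast : ℕ → ZMod 2)]
    rw [this]
    have h2 : ∀ e ∈ E', (∑ v ∈ V₀, ((if (ends e).1 = v then (1 : ZMod 2) else 0)
            + (if (ends e).2 = v then 1 else 0)))
        = (if e ∈ Γ then (1 : ZMod 2) else 0) := by
      intro e _
      rw [Finset.sum_add_distrib, Finset.sum_ite_eq V₀ (ends e).1 (fun _ => (1 : ZMod 2)),
        Finset.sum_ite_eq V₀ (ends e).2 (fun _ => (1 : ZMod 2))]
      by_cases h1 : (ends e).1 ∈ V₀ <;> by_cases h2 : (ends e).2 ∈ V₀ <;>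
        simp [h1, h2, hΓ e] <;> decide
    rw [Finset.sum_congr rfl h2, Finset.sum_ite_mem]
    simp
  have key2 : (∑ v ∈ V₀, (edgeDeg ends E' v : ZMod 2)) = ((S ∩ V₀).card : ZMod 2) := by
    have hS : S ∩ V₀ = V₀.filter (fun v => Odd (edgeDeg ends E' v)) := by
      ext v
      simp only [← hE', bdry, Finset.mem_inter, Finset.mem_sdiff, Finset.mem_filter,
        Finset.mem_univ, true_and]
      constructor
      · rintro ⟨⟨ho, _⟩, hv⟩; exact ⟨hv, ho⟩
      · rintro ⟨hv, ho⟩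
        refine ⟨⟨ho, fun hvT => ?_⟩, hv⟩
        have : v ∈ T ∩ V₀ := Finset.mem_inter.mpr ⟨hvT, hv⟩
        simp [hT] at this
    rw [hS]
    rw [Finset.card_filter]
    push_cast
    refine Finset.sum_congr rfl fun v _ => ?_
    by_cases h : Odd (edgeDeg ends E' v)
    · rw [if_pos h]
      obtain ⟨k, hk⟩ := h
      rw [hk]; push_cast
      rw [show (2:ZMod 2) = 0 from rfl]; ring
    · rw [Nat.not_odd_iff_even] at h
      obtain ⟨k, hk⟩ := h
      rw [if_neg (by rw [Nat.not_odd_iff_even]; exact ⟨k, hk⟩), hk]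
      push_cast
      ring_nf
      simp [show (2 : ZMod 2) = 0 from rfl]
  have := key1.symm.trans key2
  rwa [ZMod.natCast_eq_natCast_iff] at this
end

section
/- Let G = (V, E) be a finite graph with nonnegative edge weights φ, fix S ⊆ V, and let R₀ be a minimum-weight edge set with ∂R₀ = S. Let Γ ⊆ E and define the parity ε(R) = |R ∩ Γ| mod 2 and the set C_odd of cycles (edge sets C with ∂C = ∅) having ε(C) = 1, assumed nonempty. Define δ = min_{C ∈ C_odd} φ(R₀ Δ C) − φ(R₀). Then δ ≥ 0, and δ = 0 if and only if there exists a minimum-weight edge set R with ∂R = S and ε(R) ≠ ε(R₀). -/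
open Finset

lemma sum_symmDiff_add {E : Type*} [DecidableEq E] (A B : Finset E) (f : E → ℕ) :
    ∑ e ∈ symmDiff A B, f e + 2 * ∑ e ∈ A ∩ B, f e = ∑ e ∈ A, f e + ∑ e ∈ B, f e := by
  have h1 : ∑ e ∈ symmDiff A B, f e + ∑ e ∈ A ⊓ B, f e = ∑ e ∈ A ⊔ B, f e := by
    rw [← Finset.sum_union (disjoint_symmDiff_inf A B)]
    congr 1
    exact symmDiff_sup_inf A B
  simp only [Finset.inf_eq_inter, Finset.sup_eq_union] at h1
  have h2 := Finset.sum_union_inter (s₁ := A) (s₂ := B) (f := f)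
  omega

lemma edgeDeg_symmDiff {V E : Type*} [DecidableEq V] [DecidableEq E]
    (ends : E → V × V) (A B : Finset E) (v : V) :
    Odd (edgeDeg ends (symmDiff A B) v) ↔
      (Odd (edgeDeg ends A v) ↔ ¬ Odd (edgeDeg ends B v)) := by
  have h := sum_symmDiff_add A B
    (fun e => (if (ends e).1 = v then 1 else 0) + (if (ends e).2 = v then 1 else 0))
  simp only [edgeDeg]
  rw [Nat.odd_iff, Nat.odd_iff, Nat.odd_iff]
  omega

lemma bdry_symmDiff {V E : Type*} [Fintype V] [DecidableEq V] [DecidableEq E]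
    (ends : E → V × V) (A B : Finset E) :
    bdry ends (symmDiff A B) = symmDiff (bdry ends A) (bdry ends B) := by
  ext v
  simp only [bdry, Finset.mem_filter, Finset.mem_univ, true_and,
    Finset.mem_symmDiff, edgeDeg_symmDiff]
  tauto

lemma card_inter_symmDiff {E : Type*} [DecidableEq E] (A B Γ : Finset E) :
    ((symmDiff A B) ∩ Γ).card % 2 = ((A ∩ Γ).card + (B ∩ Γ).card) % 2 := by
  have h1 : (symmDiff A B) ∩ Γ = symmDiff (A ∩ Γ) (B ∩ Γ) := by
    ext e; simp [Finset.mem_symmDiff, Finset.mem_inter]; tauto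
  have h2 := sum_symmDiff_add (A ∩ Γ) (B ∩ Γ) (fun _ => 1)
  simp only [Finset.sum_const, smul_eq_mul, mul_one] at h2
  rw [h1]
  omega

/-- Key claim in the proof of Lemma 1: with `R₀` a minimum-weight chain of boundary `S`,
`C_odd` the (nonempty) set of odd-parity cycles, and
`δ = min_{C ∈ C_odd} φ(R₀ Δ C) − φ(R₀)`, one has `δ ≥ 0`, and `δ = 0` iff there is a
minimum-weight chain `R` with `∂R = S` of parity different from that of `R₀`. -/
theorem delta_zero_iff_uncorrectable
    {V E : Type*} [Fintype V] [DecidableEq V] [DecidableEq E]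
    (ends : E → V × V) (φ : E → ℝ) (hφ : ∀ e, 0 ≤ φ e)
    (Γ : Finset E) (S : Finset V) (R₀ : Finset E)
    (hR₀ : bdry ends R₀ = S)
    (hmin : ∀ R' : Finset E, bdry ends R' = S → ∑ f ∈ R₀, φ f ≤ ∑ f ∈ R', φ f)
    (Codd : Finset (Finset E))
    (hCodd : ∀ C : Finset E, C ∈ Codd ↔ bdry ends C = ∅ ∧ (C ∩ Γ).card % 2 = 1)
    (hne : Codd.Nonempty)
    (δ : ℝ)
    (hδ : δ = Codd.inf' hne fun C => (∑ f ∈ symmDiff R₀ C, φ f) - ∑ f ∈ R₀, φ f) :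
    0 ≤ δ ∧
      (δ = 0 ↔ ∃ R : Finset E, bdry ends R = S ∧
        (∀ R' : Finset E, bdry ends R' = S → ∑ f ∈ R, φ f ≤ ∑ f ∈ R', φ f) ∧
        (R ∩ Γ).card % 2 ≠ (R₀ ∩ Γ).card % 2) := by
  have hbdry : ∀ C ∈ Codd, bdry ends (symmDiff R₀ C) = S := by
    intro C hC
    obtain ⟨hb, -⟩ := (hCodd C).1 hC
    rw [bdry_symmDiff, hb, hR₀]
    simp
  have hd0 : 0 ≤ δ := by
    rw [hδ]
    apply Finset.le_inf'
    intro C hC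
    have := hmin _ (hbdry C hC)
    linarith
  refine ⟨hd0, ?_, ?_⟩
  · intro h0
    obtain ⟨C, hC, hCeq⟩ := Finset.exists_mem_eq_inf' hne
      fun C => (∑ f ∈ symmDiff R₀ C, φ f) - ∑ f ∈ R₀, φ f
    rw [hCeq] at hδ
    have hw : ∑ f ∈ symmDiff R₀ C, φ f = ∑ f ∈ R₀, φ f := by
      rw [h0] at hδ; linarith
    obtain ⟨-, hodd⟩ := (hCodd C).1 hC
    refine ⟨symmDiff R₀ C, hbdry C hC, ?_, ?_⟩
    · intro R' hR'
      rw [hw]; exact hmin R' hR'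
    · rw [card_inter_symmDiff]
      omega
  · rintro ⟨R, hRb, hRmin, hRpar⟩
    set C := symmDiff R₀ R with hCdef
    have hCb : bdry ends C = ∅ := by
      rw [hCdef, bdry_symmDiff, hR₀, hRb, symmDiff_self]
      rfl
    have hCpar : (C ∩ Γ).card % 2 = 1 := by
      rw [hCdef, card_inter_symmDiff]
      omega
    have hCmem : C ∈ Codd := (hCodd C).2 ⟨hCb, hCpar⟩
    have hRC : symmDiff R₀ C = R := by
      rw [hCdef]; exact symmDiff_symmDiff_cancel_left R₀ R
    have hweq : ∑ f ∈ R, φ f = ∑ f ∈ R₀, φ f :=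
      le_antisymm (hRmin R₀ hR₀) (hmin R hRb)
    have hle : δ ≤ 0 := by
      rw [hδ]
      calc Codd.inf' hne (fun C => (∑ f ∈ symmDiff R₀ C, φ f) - ∑ f ∈ R₀, φ f)
          ≤ (∑ f ∈ symmDiff R₀ C, φ f) - ∑ f ∈ R₀, φ f := Finset.inf'_le _ hCmem
        _ = 0 := by rw [hRC, hweq]; ring
    linarith
end
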